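/- Let (T^{≤c}, T^{≥c})_{c∈ℝ} be a generalized t-structure on a triangulated category T, and set T^c := T^{≤c} ∩ T^{≥c}. Then the following two conditions are equivalent: (a) there exists a discrete subset Σ ⊆ ℝ with Σ = Σ + ℤ such that every object of T^c is a zero object for all c ∈ ℝ \ Σ; (b) for every c ∈ ℝ there exist a, b ∈ ℝ with a < c < b such that T^{<c} = T^{≤a} and T^{>c} = T^{≥b}. -/

import Mathlib

open CategoryTheory CategoryTheory.Limits CategoryTheory.Pretriangulated

universe v u

/-- A classical t-structure on a (pre)triangulated category `T`, given by a pair of strictly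
full subcategories `le = T^{≤0}` and `ge = T^{≥0}` (membership in the shifted subcategories
`T^{≤n} = T^{≤0}[-n]` and `T^{≥n} = T^{≥0}[-n]` is expressed by `X⟦n⟧ ∈ le`, resp.
`X⟦n⟧ ∈ ge`, which is legitimate since both classes are closed under isomorphism). -/
structure IsClassicalTStructure (T : Type u) [Category.{v} T] [HasZeroObject T]
    [Preadditive T] [HasShift T ℤ] [∀ n : ℤ, (shiftFunctor T n).Additive]
    [Pretriangulated T] (le ge : Set T) : Prop where
  /-- `T^{≤0}` is closed under isomorphisms (strictly full). -/
  le_iso : ∀ ⦃X Y : T⦄, (X ≅ Y) → X ∈ le → Y ∈ le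
  /-- `T^{≥0}` is closed under isomorphisms (strictly full). -/
  ge_iso : ∀ ⦃X Y : T⦄, (X ≅ Y) → X ∈ ge → Y ∈ ge
  /-- `T^{≤0} ⊆ T^{≤1}`. -/
  le_shift : ∀ ⦃X : T⦄, X ∈ le → (shiftFunctor T (1 : ℤ)).obj X ∈ le
  /-- `T^{≥1} ⊆ T^{≥0}`. -/
  ge_shift : ∀ ⦃X : T⦄, (shiftFunctor T (1 : ℤ)).obj X ∈ ge → X ∈ ge
  /-- `Hom(T^{≤0}, T^{≥1}) = 0`. -/
  hom_zero : ∀ ⦃X Y : T⦄, X ∈ le → (shiftFunctor T (1 : ℤ)).obj Y ∈ ge →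
    ∀ f : X ⟶ Y, f = 0
  /-- Every object fits in a distinguished triangle `X_{≤0} → X → X_{≥1} → X_{≤0}[1]`. -/
  exists_triangle : ∀ X : T,
    ∃ (A B : T) (f : A ⟶ X) (g : X ⟶ B) (h : B ⟶ (shiftFunctor T (1 : ℤ)).obj A),
      Triangle.mk f g h ∈ (distTriang T) ∧ A ∈ le ∧ (shiftFunctor T (1 : ℤ)).obj B ∈ ge

/-- A generalized t-structure on a (pre)triangulated category `T`: a pair of families
`(le c)_{c∈ℝ} = (T^{≤c})` and `(ge c)_{c∈ℝ} = (T^{≥c})` of strictly full subcategories,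
where `T^{<c} = ⋃_{c'<c} T^{≤c'}` and `T^{>c} = ⋃_{c'>c} T^{≥c'}`, satisfying:
(a) `T^{≤c} = ⋂_{c'>c} T^{≤c'}` and `T^{≥c} = ⋂_{c'<c} T^{≥c'}`;
(b) `T^{≤c+1} = T^{≤c}[-1]` and `T^{≥c+1} = T^{≥c}[-1]`;
(c) `Hom(T^{<c}, T^{>c}) = 0`;
(d) every object fits in distinguished triangles `X_{≤c} → X → X_{>c} → ` and
`X_{<c} → X → X_{≥c} → `. -/
structure IsGeneralizedTStructure (T : Type u) [Category.{v} T] [HasZeroObject T]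
    [Preadditive T] [HasShift T ℤ] [∀ n : ℤ, (shiftFunctor T n).Additive]
    [Pretriangulated T] (le ge : ℝ → Set T) : Prop where
  le_iso : ∀ (c : ℝ) ⦃X Y : T⦄, (X ≅ Y) → X ∈ le c → Y ∈ le c
  ge_iso : ∀ (c : ℝ) ⦃X Y : T⦄, (X ≅ Y) → X ∈ ge c → Y ∈ ge c
  le_inter : ∀ c : ℝ, le c = ⋂ c' > c, le c'
  ge_inter : ∀ c : ℝ, ge c = ⋂ c' < c, ge c'
  le_shift : ∀ (c : ℝ) (X : T),
    X ∈ le (c + 1) ↔ (shiftFunctor T (1 : ℤ)).obj X ∈ le c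
  ge_shift : ∀ (c : ℝ) (X : T),
    X ∈ ge (c + 1) ↔ (shiftFunctor T (1 : ℤ)).obj X ∈ ge c
  hom_zero : ∀ (c : ℝ) ⦃X Y : T⦄, (∃ c' < c, X ∈ le c') → (∃ c' > c, Y ∈ ge c') →
    ∀ f : X ⟶ Y, f = 0
  exists_triangle_le : ∀ (X : T) (c : ℝ),
    ∃ (A B : T) (f : A ⟶ X) (g : X ⟶ B) (h : B ⟶ (shiftFunctor T (1 : ℤ)).obj A),
      Triangle.mk f g h ∈ (distTriang T) ∧ A ∈ le c ∧ ∃ c' > c, B ∈ ge c'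
  exists_triangle_ge : ∀ (X : T) (c : ℝ),
    ∃ (A B : T) (f : A ⟶ X) (g : X ⟶ B) (h : B ⟶ (shiftFunctor T (1 : ℤ)).obj A),
      Triangle.mk f g h ∈ (distTriang T) ∧ (∃ c' < c, A ∈ le c') ∧ B ∈ ge c

section Aux

variable {T : Type u} [Category.{v} T] [HasZeroObject T] [Preadditive T]
    [HasShift T ℤ] [∀ n : ℤ, (shiftFunctor T n).Additive] [Pretriangulated T]
    {le ge : ℝ → Set T}

theorem stmt6aux_le_mono (h : IsGeneralizedTStructure T le ge) {c c' : ℝ} (hcc : c ≤ c') :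
    le c ⊆ le c' := by
  intro X hX
  rcases eq_or_lt_of_le hcc with rfl | hlt
  · exact hX
  · rw [h.le_inter c] at hX
    exact Set.mem_iInter₂.1 hX c' hlt

theorem stmt6aux_ge_anti (h : IsGeneralizedTStructure T le ge) {c c' : ℝ} (hcc : c ≤ c') :
    ge c' ⊆ ge c := by
  intro X hX
  rcases eq_or_lt_of_le hcc with rfl | hlt
  · exact hX
  · rw [h.ge_inter c'] at hX
    exact Set.mem_iInter₂.1 hX c hlt

theorem stmt6aux_mem_le_limit (h : IsGeneralizedTStructure T le ge) {c : ℝ} {X : T}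
    (hX : ∀ e, c < e → X ∈ le e) : X ∈ le c := by
  rw [h.le_inter c]
  exact Set.mem_iInter₂.2 fun e he => hX e he

theorem stmt6aux_mem_ge_limit (h : IsGeneralizedTStructure T le ge) {c : ℝ} {X : T}
    (hX : ∀ e, e < c → X ∈ ge e) : X ∈ ge c := by
  rw [h.ge_inter c]
  exact Set.mem_iInter₂.2 fun e he => hX e he

theorem stmt6aux_hom_zero' (h : IsGeneralizedTStructure T le ge) {u v : ℝ} (huv : u < v)
    {X Y : T} (hX : X ∈ le u) (hY : Y ∈ ge v) (f : X ⟶ Y) : f = 0 :=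
  h.hom_zero ((u + v) / 2) ⟨u, by linarith, hX⟩ ⟨v, by linarith, hY⟩ f

theorem stmt6aux_isZero (h : IsGeneralizedTStructure T le ge) {u v : ℝ} {X : T}
    (hX : X ∈ le u) (hY : X ∈ ge v) (huv : u < v) : IsZero X :=
  (IsZero.iff_id_eq_zero X).2 (stmt6aux_hom_zero' h huv hX hY (𝟙 X))

theorem stmt6aux_isZero_shift {T : Type u} [Category.{v} T] [HasZeroObject T] [Preadditive T]
    [HasShift T ℤ] [∀ n : ℤ, (shiftFunctor T n).Additive] [Pretriangulated T]
    (n : ℤ) {X : T} (hX : IsZero X) : IsZero ((shiftFunctor T n).obj X) := by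
  rw [IsZero.iff_id_eq_zero] at hX ⊢
  rw [← (shiftFunctor T n).map_id X, hX, (shiftFunctor T n).map_zero]

theorem stmt6aux_shift_one_mem_le (h : IsGeneralizedTStructure T le ge) {c : ℝ} {A : T}
    (hA : A ∈ le c) : (shiftFunctor T (1 : ℤ)).obj A ∈ le (c - 1) := by
  refine (h.le_shift (c - 1) A).1 ?_
  have e : c - 1 + 1 = c := by ring
  rw [e]; exact hA

theorem stmt6aux_shift_neg_mem_ge (h : IsGeneralizedTStructure T le ge) {c : ℝ} {B : T}
    (hB : B ∈ ge c) : (shiftFunctor T (-1 : ℤ)).obj B ∈ ge (c + 1) :=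
  (h.ge_shift c _).2 (h.ge_iso c (shiftNegShift B (1 : ℤ)).symm hB)

end Aux

section Aux2

variable {T : Type u} [Category.{v} T] [HasZeroObject T] [Preadditive T]
    [HasShift T ℤ] [∀ n : ℤ, (shiftFunctor T n).Additive] [Pretriangulated T]
    {le ge : ℝ → Set T}

theorem stmt6aux_mem_le_of_orth (h : IsGeneralizedTStructure T le ge) {c : ℝ} {X : T}
    (hX : ∀ Y : T, (∃ d > c, Y ∈ ge d) → ∀ f : X ⟶ Y, f = 0) : X ∈ le c := by
  obtain ⟨A, B, f, g, m, hdist, hA, c'', hc'', hB⟩ := h.exists_triangle_le X c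
  have hg : g = 0 := hX B ⟨c'', hc'', hB⟩ g
  obtain ⟨t, ht⟩ := Triangle.yoneda_exact₃ _ hdist (𝟙 B)
    (by show g ≫ 𝟙 B = 0; rw [hg, zero_comp])
  have hA1 : (shiftFunctor T (1 : ℤ)).obj A ∈ le (c - 1) := stmt6aux_shift_one_mem_le h hA
  have ht0 : t = 0 := stmt6aux_hom_zero' h (show c - 1 < c'' by linarith) hA1 hB t
  have hBz : IsZero B := (IsZero.iff_id_eq_zero B).2 (by rw [ht, ht0, comp_zero]; rfl)
  haveI : IsIso f := (Triangle.isZero₃_iff_isIso₁ _ hdist).1 hBz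
  exact h.le_iso c (asIso f) hA

theorem stmt6aux_mem_ge_of_orth (h : IsGeneralizedTStructure T le ge) {c : ℝ} {Y : T}
    (hY : ∀ W : T, (∃ d < c, W ∈ le d) → ∀ f : W ⟶ Y, f = 0) : Y ∈ ge c := by
  obtain ⟨A, B, f, g, m, hdist, ⟨c₁, hc₁, hA⟩, hB⟩ := h.exists_triangle_ge Y c
  have hf : f = 0 := hY A ⟨c₁, hc₁, hA⟩ f
  obtain ⟨u, hu⟩ := Triangle.coyoneda_exact₂ _ (inv_rot_of_distTriang _ hdist) (𝟙 A)
    (by show 𝟙 A ≫ f = 0; rw [hf, comp_zero])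
  have hBneg : (shiftFunctor T (-1 : ℤ)).obj B ∈ ge (c + 1) := stmt6aux_shift_neg_mem_ge h hB
  have hu0 : u = 0 := stmt6aux_hom_zero' h (show c₁ < c + 1 by linarith) hA hBneg u
  have hAz : IsZero A := (IsZero.iff_id_eq_zero A).2 (by rw [hu, hu0, zero_comp]; rfl)
  haveI : IsIso g := (Triangle.isZero₁_iff_isIso₂ _ hdist).1 hAz
  exact h.ge_iso c (asIso g).symm hB

theorem stmt6aux_le_ext (h : IsGeneralizedTStructure T le ge) {p t : ℝ} (hpt : p ≤ t)
    {A X B : T} {f : A ⟶ X} {g : X ⟶ B} {m : B ⟶ (shiftFunctor T (1 : ℤ)).obj A}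
    (hdist : Triangle.mk f g m ∈ distTriang T) (hA : A ∈ le p) (hX : X ∈ le t) :
    B ∈ le t := by
  refine stmt6aux_mem_le_of_orth h ?_
  rintro Z ⟨d, hd, hZ⟩ u
  have h1 : g ≫ u = 0 := stmt6aux_hom_zero' h hd hX hZ _
  obtain ⟨v, hv⟩ := Triangle.yoneda_exact₃ _ hdist u h1
  have hA1 : (shiftFunctor T (1 : ℤ)).obj A ∈ le (p - 1) := stmt6aux_shift_one_mem_le h hA
  have hv0 : v = 0 := stmt6aux_hom_zero' h (show p - 1 < d by linarith) hA1 hZ v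
  rw [hv, hv0, comp_zero]; rfl

theorem stmt6aux_ge_ext (h : IsGeneralizedTStructure T le ge) {r q : ℝ} (hrq : r ≤ q)
    {A Y B : T} {f : A ⟶ Y} {g : Y ⟶ B} {m : B ⟶ (shiftFunctor T (1 : ℤ)).obj A}
    (hdist : Triangle.mk f g m ∈ distTriang T) (hYmem : Y ∈ ge r) (hB : B ∈ ge q) :
    A ∈ ge r := by
  refine stmt6aux_mem_ge_of_orth h ?_
  rintro W ⟨w, hw, hW⟩ u
  have h1 : u ≫ f = 0 := stmt6aux_hom_zero' h hw hW hYmem _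
  obtain ⟨v, hv⟩ := Triangle.coyoneda_exact₂ _ (inv_rot_of_distTriang _ hdist) u h1
  have hBneg : (shiftFunctor T (-1 : ℤ)).obj B ∈ ge (q + 1) := stmt6aux_shift_neg_mem_ge h hB
  have hv0 : v = 0 := stmt6aux_hom_zero' h (show w < q + 1 by linarith) hW hBneg v
  rw [hv, hv0, zero_comp]; rfl

end Aux2

section Aux3

variable {T : Type u} [Category.{v} T] [HasZeroObject T] [Preadditive T]
    [HasShift T ℤ] [∀ n : ℤ, (shiftFunctor T n).Additive] [Pretriangulated T]
    {le ge : ℝ → Set T}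

theorem stmt6aux_le_loc (h : IsGeneralizedTStructure T le ge) {S : Set ℝ}
    (hS : ∀ c : ℝ, c ∉ S → ∀ X : T, X ∈ le c → X ∈ ge c → IsZero X)
    {a c : ℝ} (hac : a < c) (hfree : ∀ x, a < x → x < c → x ∉ S) :
    {X : T | ∃ c' < c, X ∈ le c'} = le a := by
  ext X
  constructor
  · rintro ⟨c', hc', hX⟩
    by_contra hXa
    have hEne : Set.Nonempty {e : ℝ | X ∈ le e} := ⟨c', hX⟩
    have hlb : ∀ e ∈ {e : ℝ | X ∈ le e}, a ≤ e := by
      intro e he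
      by_contra hea
      exact hXa (stmt6aux_le_mono h (le_of_lt (not_le.1 hea)) he)
    have hbdd : BddBelow {e : ℝ | X ∈ le e} := ⟨a, hlb⟩
    set t := sInf {e : ℝ | X ∈ le e} with htdef
    have hat : a ≤ t := le_csInf hEne hlb
    have hXt : X ∈ le t := by
      refine stmt6aux_mem_le_limit h ?_
      intro e he
      obtain ⟨e', he'E, he'lt⟩ := (csInf_lt_iff hbdd hEne).1 he
      exact stmt6aux_le_mono h he'lt.le he'E
    have hta : a < t := by
      rcases eq_or_lt_of_le hat with heq | h' 
      · exact absurd (heq ▸ hXt) hXa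
      · exact h'
    have htc : t < c := lt_of_le_of_lt (csInf_le hbdd hX) hc'
    obtain ⟨P, Q, f, g, m, hdist, ⟨p, hp, hP⟩, hQ⟩ := h.exists_triangle_ge X t
    have hQle : Q ∈ le t := stmt6aux_le_ext h hp.le hdist hP hXt
    have hQne : ¬ IsZero Q := by
      intro hz
      haveI : IsIso f := (Triangle.isZero₃_iff_isIso₁ _ hdist).1 hz
      have hXp : X ∈ le p := h.le_iso p (asIso f) hP
      have : t ≤ p := csInf_le hbdd hXp
      linarith
    exact hQne (hS t (hfree t hta htc) Q hQle hQ)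
  · intro hX
    exact ⟨a, hac, hX⟩

theorem stmt6aux_ge_loc (h : IsGeneralizedTStructure T le ge) {S : Set ℝ}
    (hS : ∀ c : ℝ, c ∉ S → ∀ X : T, X ∈ le c → X ∈ ge c → IsZero X)
    {c b : ℝ} (hcb : c < b) (hfree : ∀ x, c < x → x < b → x ∉ S) :
    {X : T | ∃ c' > c, X ∈ ge c'} = ge b := by
  ext Y
  constructor
  · rintro ⟨d, hd, hY⟩
    by_contra hYb
    have hFne : Set.Nonempty {e : ℝ | Y ∈ ge e} := ⟨d, hY⟩
    have hub : ∀ e ∈ {e : ℝ | Y ∈ ge e}, e ≤ b := by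
      intro e he
      by_contra heb
      exact hYb (stmt6aux_ge_anti h (le_of_lt (not_le.1 heb)) he)
    have hbdd : BddAbove {e : ℝ | Y ∈ ge e} := ⟨b, hub⟩
    set r := sSup {e : ℝ | Y ∈ ge e} with hrdef
    have hrb : r ≤ b := csSup_le hFne hub
    have hYr : Y ∈ ge r := by
      refine stmt6aux_mem_ge_limit h ?_
      intro e he
      obtain ⟨e', he'F, he'lt⟩ := (lt_csSup_iff hbdd hFne).1 he
      exact stmt6aux_ge_anti h he'lt.le he'F
    have hrb' : r < b := lt_of_le_of_ne hrb (fun heq => hYb (heq ▸ hYr))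
    have hcr : c < r := lt_of_lt_of_le hd (le_csSup hbdd hY)
    obtain ⟨P, Q, f, g, m, hdist, hP, q, hq, hQ⟩ := h.exists_triangle_le Y r
    have hPge : P ∈ ge r := stmt6aux_ge_ext h hq.le hdist hYr hQ
    have hPz : IsZero P := hS r (hfree r hcr hrb') P hP hPge
    haveI : IsIso g := (Triangle.isZero₁_iff_isIso₂ _ hdist).1 hPz
    have hYq : Y ∈ ge q := h.ge_iso q (asIso g).symm hQ
    have : q ≤ r := le_csSup hbdd hYq
    linarith
  · intro hY
    exact ⟨b, hcb, hY⟩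

end Aux3

/-- Let `(T^{≤c}, T^{≥c})_{c∈ℝ}` be a generalized t-structure on a triangulated
category `T`, and set `T^c := T^{≤c} ∩ T^{≥c}`. The following are equivalent:
(a) there is a discrete subset `S ⊆ ℝ` (no accumulation point in `ℝ`) with `S = S + ℤ`
such that every object of `T^c` is zero for all `c ∉ S`;
(b) for every `c ∈ ℝ` there exist `a < c < b` with `T^{<c} = T^{≤a}` and `T^{>c} = T^{≥b}`. -/
theorem stmt6 {T : Type u} [Category.{v} T] [HasZeroObject T] [Preadditive T]
    [HasShift T ℤ] [∀ n : ℤ, (shiftFunctor T n).Additive] [Pretriangulated T]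
    (le ge : ℝ → Set T) (h : IsGeneralizedTStructure T le ge) :
    (∃ S : Set ℝ, (∀ x : ℝ, ¬ AccPt x (Filter.principal S)) ∧
        S = {x : ℝ | ∃ s ∈ S, ∃ n : ℤ, x = s + n} ∧
        ∀ c : ℝ, c ∉ S → ∀ X : T, X ∈ le c → X ∈ ge c → IsZero X) ↔
      (∀ c : ℝ, ∃ a b : ℝ, a < c ∧ c < b ∧
        {X : T | ∃ c' < c, X ∈ le c'} = le a ∧
        {X : T | ∃ c' > c, X ∈ ge c'} = ge b) := by
  constructor
  · rintro ⟨S, hdisc, _hinv, hzero⟩ c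
    have hacc := hdisc c
    rw [accPt_iff_nhds] at hacc
    push_neg at hacc
    obtain ⟨U, hU, hUS⟩ := hacc
    obtain ⟨ε, hε, hball⟩ := Metric.mem_nhds_iff.1 hU
    refine ⟨c - ε / 2, c + ε / 2, by linarith, by linarith, ?_, ?_⟩
    · refine stmt6aux_le_loc h hzero (by linarith) ?_
      intro x hx1 hx2 hxS
      have hx : x ∈ U := hball (by
        rw [Metric.mem_ball, Real.dist_eq, abs_lt]
        constructor <;> linarith)
      have := hUS x ⟨hx, hxS⟩
      linarith
    · refine stmt6aux_ge_loc h hzero (by linarith) ?_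
      intro x hx1 hx2 hxS
      have hx : x ∈ U := hball (by
        rw [Metric.mem_ball, Real.dist_eq, abs_lt]
        constructor <;> linarith)
      have := hUS x ⟨hx, hxS⟩
      linarith
  · intro hb
    refine ⟨{c : ℝ | ∃ X : T, X ∈ le c ∧ X ∈ ge c ∧ ¬ IsZero X}, ?_, ?_, ?_⟩
    · intro x
      rw [accPt_iff_nhds]
      push_neg
      obtain ⟨a, b, hax, hxb, hle, hge⟩ := hb x
      refine ⟨Set.Ioo a b, Ioo_mem_nhds hax hxb, ?_⟩
      rintro y ⟨⟨hay, hyb⟩, X, hXle, hXge, hXnz⟩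
      by_contra hyx
      rcases lt_or_gt_of_ne hyx with hlt | hgt
      · have hXa : X ∈ le a := by
          rw [← hle]; exact ⟨y, hlt, hXle⟩
        exact hXnz (stmt6aux_isZero h hXa hXge hay)
      · have hXb : X ∈ ge b := by
          rw [← hge]; exact ⟨y, hgt, hXge⟩
        exact hXnz (stmt6aux_isZero h hXle hXb hyb)
    · have up : ∀ s : ℝ, (∃ X : T, X ∈ le s ∧ X ∈ ge s ∧ ¬ IsZero X) →
          ∃ X : T, X ∈ le (s + 1) ∧ X ∈ ge (s + 1) ∧ ¬ IsZero X := by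
        rintro s ⟨X, hle', hge', hnz⟩
        refine ⟨(shiftFunctor T (-1 : ℤ)).obj X, ?_, ?_, ?_⟩
        · exact (h.le_shift s _).2 (h.le_iso s (shiftNegShift X (1 : ℤ)).symm hle')
        · exact (h.ge_shift s _).2 (h.ge_iso s (shiftNegShift X (1 : ℤ)).symm hge')
        · intro hz
          exact hnz (IsZero.of_iso (stmt6aux_isZero_shift (1 : ℤ) hz)
            (shiftNegShift X (1 : ℤ)).symm)
      have down : ∀ s : ℝ, (∃ X : T, X ∈ le (s + 1) ∧ X ∈ ge (s + 1) ∧ ¬ IsZero X) →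
          ∃ X : T, X ∈ le s ∧ X ∈ ge s ∧ ¬ IsZero X := by
        rintro s ⟨X, hle', hge', hnz⟩
        refine ⟨(shiftFunctor T (1 : ℤ)).obj X, (h.le_shift s X).1 hle',
          (h.ge_shift s X).1 hge', ?_⟩
        intro hz
        exact hnz (IsZero.of_iso (stmt6aux_isZero_shift (-1 : ℤ) hz)
          (shiftShiftNeg X (1 : ℤ)).symm)
      have step : ∀ s : ℝ, (∃ X : T, X ∈ le s ∧ X ∈ ge s ∧ ¬ IsZero X) → ∀ n : ℤ,
          ∃ X : T, X ∈ le (s + n) ∧ X ∈ ge (s + n) ∧ ¬ IsZero X := by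
        intro s hs n
        induction n using Int.induction_on with
        | zero => simpa using hs
        | succ k ih =>
          have e : s + ((k : ℤ) + 1 : ℤ) = (s + (k : ℤ)) + 1 := by push_cast; ring
          rw [e]
          exact up _ ih
        | pred k ih =>
          have e : s + (-(k : ℤ) - 1 : ℤ) + 1 = s + (-(k : ℤ) : ℤ) := by push_cast; ring
          exact down _ (by rw [e]; exact ih)
      ext x
      constructor
      · intro hx
        exact ⟨x, hx, 0, by simp⟩
      · rintro ⟨s, hs, n, rfl⟩
        exact step s hs n
    · intro c hc X hXle hXge
      by_contra hz
      exact hc ⟨X, hXle, hXge, hz⟩
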